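/- Multipartite hypergraph Ramsey theorem: fix k ≥ 1, vectors n, m ∈ ℕᵏ, and c ≥ 1 colors. There exists R ∈ ℕ such that for every list X = (X₁,…,X_k) of finite sets with |Xᵢ| ≥ R for all i, and every c-coloring of all subset-lists of X, there is a subset-list Y ⊆ X with |Yᵢ| ≥ nᵢ for all i such that for every a ≤ m (coordinatewise), all a-subset-lists of Y receive the same color. -/

import Mathlib

open Finset

def RMono {κ : Type} (col : Finset ℕ → κ) (r : ℕ) (H : Finset ℕ) : Prop :=
  ∀ A ⊆ H, ∀ B ⊆ H, A.card = r → B.card = r → col A = col B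

def rg (D : ℕ) : ℕ → ℕ
  | 0 => 1
  | s + 1 => D * rg D s + 1

lemma select {κ : Type} [Fintype κ] (col : Finset ℕ → κ) (r D Bn : ℕ)
    (hD : ∀ u : Finset ℕ, u.card ≤ Bn →
      Fintype.card ({A // A ∈ u.powersetCard r} → κ) ≤ D) :
    ∀ (s : ℕ) (chosen rest : Finset ℕ),
      chosen.card + s ≤ Bn →
      (∀ A ⊆ chosen, A.card = r → ∀ y ∈ rest, ∀ z ∈ rest,
          col (insert y A) = col (insert z A)) →
      (∀ x ∈ chosen, ∀ y ∈ rest, x < y) →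
      (∀ A ⊆ chosen, A.card = r → ∀ b ∈ chosen, (∀ x ∈ A, x < b) →
          ∀ y ∈ rest, col (insert b A) = col (insert y A)) →
      rg D s ≤ rest.card →
      ∃ chosen' rest', chosen ⊆ chosen' ∧ chosen' ⊆ chosen ∪ rest ∧
        rest' ⊆ rest ∧ rest'.Nonempty ∧ chosen'.card = chosen.card + s ∧
        (∀ A ⊆ chosen', A.card = r → ∀ b ∈ chosen', (∀ x ∈ A, x < b) →
          ∀ y ∈ rest', col (insert b A) = col (insert y A)) := by
  classical
  intro s
  induction s with
  | zero =>
    intro chosen rest _ _ _ h3 hcard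
    refine ⟨chosen, rest, subset_rfl, subset_union_left, subset_rfl, ?_, by simp, h3⟩
    exact card_pos.mp (lt_of_lt_of_le one_pos hcard)
  | succ s ih =>
    intro chosen rest hB h1 h2 h3 hcard
    have hκ : Nonempty κ := ⟨col ∅⟩
    have hrg : rg D (s+1) = D * rg D s + 1 := rfl
    have hrest : rest.Nonempty := by
      apply card_pos.mp; omega
    set y₀ := rest.min' hrest with hy₀
    have hy₀r : y₀ ∈ rest := rest.min'_mem hrest
    have hy₀c : y₀ ∉ chosen := fun h => lt_irrefl y₀ (h2 y₀ h y₀ hy₀r)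
    set C : Finset ℕ := insert y₀ chosen with hC
    have hCcard : C.card = chosen.card + 1 := card_insert_of_notMem hy₀c
    have hCB : C.card ≤ Bn := by omega
    set rest₀ := rest.erase y₀ with hrest₀
    have hr₀card : D * rg D s ≤ rest₀.card := by
      rw [hrest₀, card_erase_of_mem hy₀r]; omega
    -- pigeonhole
    set τ := ({A // A ∈ C.powersetCard r} → κ) with hτ
    set φ : ℕ → τ := fun y A => col (insert y A.1) with hφ
    have hpig := Finset.exists_le_card_fiber_of_mul_le_card_of_maps_to
      (s := rest₀) (t := (Finset.univ : Finset τ)) (f := φ) (n := rg D s)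
      (fun a _ => mem_univ _) univ_nonempty ?cardle
    case cardle =>
      rw [Finset.card_univ]
      calc Fintype.card τ * rg D s ≤ D * rg D s :=
            Nat.mul_le_mul_right _ (hD C hCB)
        _ ≤ rest₀.card := hr₀card
    obtain ⟨v, -, hv⟩ := hpig
    set F : Finset ℕ := {x ∈ rest₀ | φ x = v} with hF
    have hFrest : F ⊆ rest := fun x hx => (mem_erase.mp (mem_filter.mp hx).1).2
    have hFrest₀ : F ⊆ rest₀ := fun x hx => (mem_filter.mp hx).1
    -- new invariants
    have h2' : ∀ x ∈ C, ∀ y ∈ F, x < y := by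
      intro x hx y hy
      rcases mem_insert.mp hx with h | h
      · subst h
        have hyr := mem_erase.mp (hFrest₀ hy)
        exact lt_of_le_of_ne (min'_le _ _ (hyr.2)) (Ne.symm hyr.1)
      · exact h2 x h y (hFrest hy)
    have h1' : ∀ A ⊆ C, A.card = r → ∀ y ∈ F, ∀ z ∈ F,
        col (insert y A) = col (insert z A) := by
      intro A hA hAr y hy z hz
      have hyv : φ y = v := (mem_filter.mp hy).2
      have hzv : φ z = v := (mem_filter.mp hz).2
      have : φ y ⟨A, mem_powersetCard.mpr ⟨hA, hAr⟩⟩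
           = φ z ⟨A, mem_powersetCard.mpr ⟨hA, hAr⟩⟩ := by rw [hyv, hzv]
      exact this
    have h3' : ∀ A ⊆ C, A.card = r → ∀ b ∈ C, (∀ x ∈ A, x < b) →
        ∀ y ∈ F, col (insert b A) = col (insert y A) := by
      intro A hA hAr b hb hxb y hy
      rcases mem_insert.mp hb with hb' | hb'
      · -- b = y₀ : use h1
        subst hb'
        have hAch : A ⊆ chosen := by
          intro x hx
          rcases mem_insert.mp (hA hx) with h | h
          · exact absurd h (by have := hxb x hx; omega)
          · exact h
        exact h1 A hAch hAr y₀ hy₀r y (hFrest hy)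
      · -- b ∈ chosen : use h3
        have hAch : A ⊆ chosen := by
          intro x hx
          rcases mem_insert.mp (hA hx) with h | h
          · exfalso
            have hxy : x < b := hxb x hx
            have : b < y₀ := h2 b hb' y₀ hy₀r
            omega
          · exact h
        exact h3 A hAch hAr b hb' hxb y (hFrest hy)
    obtain ⟨chosen', rest', hsub1, hsub2, hsub3, hne, hcard', hI3⟩ :=
      ih C F (by omega) h1' h2' h3' hv
    refine ⟨chosen', rest', ?_, ?_, hsub3.trans hFrest, hne, ?_, hI3⟩
    · exact (subset_insert _ _).trans hsub1
    · intro x hx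
      rcases mem_union.mp (hsub2 hx) with h | h
      · rcases mem_insert.mp h with h' | h'
        · exact mem_union_right _ (h' ▸ hy₀r)
        · exact mem_union_left _ h'
      · exact mem_union_right _ (hFrest h)
    · rw [hcard', hCcard]; omega

def RamseyP (κ : Type) [Fintype κ] (r n R : ℕ) : Prop :=
  ∀ V : Finset ℕ, R ≤ V.card → ∀ col : Finset ℕ → κ,
    ∃ H, H ⊆ V ∧ n ≤ H.card ∧ RMono col r H

lemma ramsey_zero (κ : Type) [Fintype κ] (n : ℕ) : RamseyP κ 0 n n := by
  intro V hV col
  obtain ⟨H, hHV, hHcard⟩ := Finset.exists_subset_card_eq hV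
  refine ⟨H, hHV, hHcard.ge, ?_⟩
  intro A _ B _ hA hB
  rw [card_eq_zero.mp hA, card_eq_zero.mp hB]

lemma ramsey_step (κ : Type) [Fintype κ] (r n : ℕ)
    (hIH : ∃ T, RamseyP κ r n T) : ∃ R, RamseyP κ (r + 1) n R := by
  classical
  obtain ⟨T, hT⟩ := hIH
  set K := Fintype.card κ with hK
  set D := (max 1 K) ^ (2 ^ T) with hDdef
  refine ⟨D * rg D T + 1, ?_⟩
  intro V hV col
  have hκ : Nonempty κ := ⟨col ∅⟩
  have hK1 : 1 ≤ K := Fintype.card_pos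
  have hD : ∀ u : Finset ℕ, u.card ≤ T →
      Fintype.card ({A // A ∈ u.powersetCard r} → κ) ≤ D := by
    intro u hu
    have h1 : Fintype.card ({A // A ∈ u.powersetCard r} → κ)
        = K ^ (u.powersetCard r).card := by
      rw [Fintype.card_fun, Fintype.card_coe]
    have h2 : (u.powersetCard r).card ≤ 2 ^ T := by
      calc (u.powersetCard r).card ≤ u.powerset.card :=
            card_le_card (fun A hA => mem_powerset.mpr (mem_powersetCard.mp hA).1)
        _ = 2 ^ u.card := card_powerset u
        _ ≤ 2 ^ T := Nat.pow_le_pow_right (by norm_num) hu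
    rw [h1, hDdef]
    calc K ^ (u.powersetCard r).card ≤ (max 1 K) ^ (u.powersetCard r).card :=
          Nat.pow_le_pow_left (le_max_right _ _) _
      _ ≤ (max 1 K) ^ (2 ^ T) := Nat.pow_le_pow_right (lt_of_lt_of_le one_pos (le_max_left _ _)) h2
  -- initial shrink to establish invariant I1 for chosen = ∅
  set τ₀ := ({A // A ∈ (∅ : Finset ℕ).powersetCard r} → κ) with hτ₀
  set φ₀ : ℕ → τ₀ := fun y A => col (insert y A.1) with hφ₀
  obtain ⟨v₀, -, hv₀⟩ := Finset.exists_le_card_fiber_of_mul_le_card_of_maps_to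
    (s := V) (t := (Finset.univ : Finset τ₀)) (f := φ₀) (n := rg D T)
    (fun a _ => mem_univ _) univ_nonempty (by
      rw [Finset.card_univ]
      calc Fintype.card τ₀ * rg D T ≤ D * rg D T :=
            Nat.mul_le_mul_right _ (hD ∅ (by simp))
        _ ≤ V.card := by omega)
  set V₀ : Finset ℕ := {x ∈ V | φ₀ x = v₀} with hV₀
  have hV₀V : V₀ ⊆ V := filter_subset _ _
  have hI1 : ∀ A ⊆ (∅ : Finset ℕ), A.card = r → ∀ y ∈ V₀, ∀ z ∈ V₀,
      col (insert y A) = col (insert z A) := by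
    intro A hA hAr y hy z hz
    have : φ₀ y ⟨A, mem_powersetCard.mpr ⟨hA, hAr⟩⟩
         = φ₀ z ⟨A, mem_powersetCard.mpr ⟨hA, hAr⟩⟩ := by
      rw [(mem_filter.mp hy).2, (mem_filter.mp hz).2]
    exact this
  obtain ⟨chosen', rest', -, hchsub, hrsub, hrne, hchcard, hI3⟩ :=
    select col r D T hD T ∅ V₀ (by simp) hI1 (by simp) (by simp) hv₀
  obtain ⟨y₁, hy₁⟩ := hrne
  have hchV : chosen' ⊆ V := by
    intro x hx
    rcases mem_union.mp (hchsub hx) with h | h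
    · simp at h
    · exact hV₀V h
  obtain ⟨H, hHch, hHcard, hHmono⟩ := hT chosen'
    (by simp [hchcard]) (fun A => col (insert y₁ A))
  refine ⟨H, (fun x hx => hchV (hHch hx)), hHcard, ?_⟩
  have key : ∀ B, B ⊆ H → B.card = r + 1 → ∀ hBne : B.Nonempty,
      col B = col (insert y₁ (B.erase (B.max' hBne))) := by
    intro B hBH hBr hBne
    set b := B.max' hBne with hb
    have hbB : b ∈ B := B.max'_mem hBne
    set A := B.erase b with hA
    have hAcard : A.card = r := by rw [hA, card_erase_of_mem hbB, hBr]; omega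
    have hAch : A ⊆ chosen' := fun x hx => hHch (hBH (erase_subset _ _ hx))
    have hxb : ∀ x ∈ A, x < b := by
      intro x hx
      have := mem_erase.mp hx
      exact lt_of_le_of_ne (B.le_max' x this.2) this.1
    have := hI3 A hAch hAcard b (hHch (hBH hbB)) hxb y₁ hy₁
    rwa [insert_erase hbB] at this
  intro A hAH B hBH hAr hBr
  have hAne : A.Nonempty := card_pos.mp (by omega)
  have hBne : B.Nonempty := card_pos.mp (by omega)
  rw [key A hAH hAr hAne, key B hBH hBr hBne]
  exact hHmono _ (fun x hx => hAH (erase_subset _ _ hx))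
    _ (fun x hx => hBH (erase_subset _ _ hx))
    (by rw [card_erase_of_mem (A.max'_mem _), hAr]; omega)
    (by rw [card_erase_of_mem (B.max'_mem _), hBr]; omega)

lemma ramseyP_exists (κ : Type) [Fintype κ] (r n : ℕ) : ∃ R, RamseyP κ r n R := by
  induction r generalizing n with
  | zero => exact ⟨n, ramsey_zero κ n⟩
  | succ r ih => exact ramsey_step κ r n (ih n)

lemma ramsey_all (κ : Type) [Fintype κ] (S n : ℕ) :
    ∃ R, ∀ V : Finset ℕ, R ≤ V.card → ∀ col : Finset ℕ → κ,
      ∃ H, H ⊆ V ∧ n ≤ H.card ∧ ∀ r ≤ S, RMono col r H := by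
  induction S with
  | zero =>
    obtain ⟨R, hR⟩ := ramseyP_exists κ 0 n
    refine ⟨R, fun V hV col => ?_⟩
    obtain ⟨H, h1, h2, h3⟩ := hR V hV col
    exact ⟨H, h1, h2, fun r hr => by rwa [Nat.le_zero.mp hr]⟩
  | succ S ih =>
    obtain ⟨R₁, hR₁⟩ := ih
    obtain ⟨R₂, hR₂⟩ := ramseyP_exists κ (S + 1) R₁
    refine ⟨R₂, fun V hV col => ?_⟩
    obtain ⟨H₁, hH₁V, hH₁card, hH₁mono⟩ := hR₂ V hV col
    obtain ⟨H, hHH₁, hHcard, hHmono⟩ := hR₁ H₁ hH₁card col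
    refine ⟨H, hHH₁.trans hH₁V, hHcard, fun r hr => ?_⟩
    rcases Nat.lt_or_ge r (S + 1) with h | h
    · exact hHmono r (by omega)
    · have : r = S + 1 := by omega
      subst this
      exact fun A hA B hB => hH₁mono A (hA.trans hHH₁) B (hB.trans hHH₁)

section Zpart
def roff {k : ℕ} (a : Fin k → ℕ) (i : Fin k) : ℕ :=
  ∑ j ∈ univ.filter (fun j => j < i), a j

def zpart {k : ℕ} (T : Finset ℕ) (a : Fin k → ℕ) (i : Fin k) : Finset ℕ :=
  T.filter (fun t => roff a i ≤ (T.filter (· < t)).card ∧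
    (T.filter (· < t)).card < roff a i + a i)

lemma roff_add_le {k : ℕ} (a : Fin k → ℕ) {j i : Fin k} (h : j < i) :
    roff a j + a j ≤ roff a i := by
  classical
  have hsub : insert j (univ.filter (fun x => x < j)) ⊆ univ.filter (fun x => x < i) := by
    intro x hx
    rcases mem_insert.mp hx with h' | h'
    · subst h'; simp [h]
    · simp only [mem_filter, mem_univ, true_and] at h' ⊢
      exact h'.trans h
  have := Finset.sum_le_sum_of_subset (f := a) hsub
  rw [Finset.sum_insert (by simp)] at this
  rw [roff, roff]
  omega

lemma zpart_eq {k : ℕ} (Tb : Fin k → Finset ℕ) (a : Fin k → ℕ)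
    (hord : ∀ i j : Fin k, i < j → ∀ s ∈ Tb i, ∀ t ∈ Tb j, s < t)
    (hcard : ∀ i, (Tb i).card = a i) (i : Fin k) :
    zpart (univ.biUnion Tb) a i = Tb i := by
  classical
  have hdisj : ∀ x ∈ (univ : Finset (Fin k)), ∀ y ∈ univ, x ≠ y →
      Disjoint (Tb x) (Tb y) := by
    intro x _ y _ hxy
    rw [Finset.disjoint_left]
    intro s hs hs'
    rcases lt_or_gt_of_ne hxy with h | h
    · exact lt_irrefl s (hord x y h s hs s hs')
    · exact lt_irrefl s (hord y x h s hs' s hs)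
  set T := univ.biUnion Tb with hT
  -- rank formula
  have hrank : ∀ j : Fin k, ∀ t ∈ Tb j,
      (T.filter (· < t)).card = roff a j + ((Tb j).filter (· < t)).card := by
    intro j t ht
    have h1 : T.filter (· < t) = univ.biUnion (fun l => (Tb l).filter (· < t)) :=
      filter_biUnion _ _ _
    rw [h1, card_biUnion (fun x hx y hy hxy =>
      disjoint_filter_filter (hdisj x hx y hy hxy))]
    rw [← Finset.sum_filter_add_sum_filter_not univ (fun l => l < j)]
    have e1 : ∑ l ∈ univ.filter (fun l => l < j), ((Tb l).filter (· < t)).card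
        = roff a j := by
      apply Finset.sum_congr rfl
      intro l hl
      have hl' : l < j := (mem_filter.mp hl).2
      rw [filter_true_of_mem (fun s hs => hord l j hl' s hs t ht), hcard]
    have e2 : ∑ l ∈ univ.filter (fun l => ¬ l < j), ((Tb l).filter (· < t)).card
        = ((Tb j).filter (· < t)).card := by
      apply Finset.sum_eq_single_of_mem j (by simp)
      intro l hl hlj
      have : j < l := lt_of_le_of_ne (not_lt.mp (mem_filter.mp hl).2) (Ne.symm hlj)
      rw [filter_false_of_mem, card_empty]
      intro s hs
      exact not_lt.mpr (le_of_lt (hord j l this t ht s hs))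
    rw [e1, e2]
  have hrho : ∀ j : Fin k, ∀ t ∈ Tb j, ((Tb j).filter (· < t)).card < a j := by
    intro j t ht
    rw [← hcard j]
    apply card_lt_card
    constructor
    · exact filter_subset _ _
    · intro hsub
      exact absurd ((mem_filter.mp (hsub ht)).2) (lt_irrefl t)
  apply Finset.Subset.antisymm
  · intro t hzt
    obtain ⟨htT, hlo, hhi⟩ := mem_filter.mp hzt
    obtain ⟨j, -, htj⟩ := mem_biUnion.mp htT
    have hr := hrank j t htj
    have hρ := hrho j t htj
    rcases lt_trichotomy j i with h | h | h
    · exfalso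
      have := roff_add_le a h
      omega
    · rwa [h] at htj
    · exfalso
      have := roff_add_le a h
      omega
  · intro t ht
    have htT : t ∈ T := mem_biUnion.mpr ⟨i, mem_univ i, ht⟩
    have hr := hrank i t ht
    have hρ := hrho i t ht
    refine mem_filter.mpr ⟨htT, by omega, by omega⟩

end Zpart

theorem stmt_18 (k : ℕ) (hk : 1 ≤ k) (n m : Fin k → ℕ) (c : ℕ) (hc : 1 ≤ c) :
    ∃ R : ℕ, ∀ (α : Type) (X : Fin k → Finset α),
      (∀ i, R ≤ (X i).card) →
      ∀ col : (Fin k → Finset α) → Fin c,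
      ∃ Y : Fin k → Finset α,
        (∀ i, Y i ⊆ X i) ∧ (∀ i, n i ≤ (Y i).card) ∧
        ∀ a : Fin k → ℕ, (∀ i, a i ≤ m i) →
          ∀ Z W : Fin k → Finset α,
            (∀ i, Z i ⊆ Y i) → (∀ i, (Z i).card = a i) →
            (∀ i, W i ⊆ Y i) → (∀ i, (W i).card = a i) →
            col Z = col W := by
  classical
  set κ := ((∀ i : Fin k, Fin (m i + 1)) → Fin c) with hκdef
  set S := ∑ i, m i with hS
  set N := univ.sup n with hN
  obtain ⟨R₀, hR₀⟩ := ramsey_all κ S (k * N)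
  refine ⟨max R₀ 1, ?_⟩
  set R := max R₀ 1 with hR
  intro α X hX col
  have hα : Nonempty α := by
    have h1 : 1 ≤ (X ⟨0, hk⟩).card := le_trans (le_max_right R₀ 1) (hX ⟨0, hk⟩)
    obtain ⟨x, hx⟩ := card_pos.mp h1
    exact ⟨x⟩
  have hchoose : ∀ i, ∃ X' : Finset α, X' ⊆ X i ∧ X'.card = R := by
    intro i
    obtain ⟨t, ht, htc⟩ := exists_subset_card_eq (hX i)
    exact ⟨t, ht, htc⟩
  choose X' hX'sub hX'card using hchoose
  set x : Fin k → ℕ → α := fun i j =>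
    if h : j < (X' i).card then ((X' i).equivFin.symm ⟨j, h⟩ : α)
    else Classical.arbitrary α with hx
  have hmem : ∀ i, ∀ j < R, x i j ∈ X i := by
    intro i j hj
    rw [hx]
    simp only
    rw [dif_pos (by rw [hX'card]; exact hj)]
    exact hX'sub i ((X' i).equivFin.symm _).2
  have hinj : ∀ i, ∀ j₁ < R, ∀ j₂ < R, x i j₁ = x i j₂ → j₁ = j₂ := by
    intro i j₁ hj₁ j₂ hj₂ hEq
    rw [hx] at hEq
    simp only at hEq
    rw [dif_pos (by rw [hX'card]; exact hj₁), dif_pos (by rw [hX'card]; exact hj₂)] at hEq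
    have h2 := (X' i).equivFin.symm.injective (Subtype.ext hEq)
    exact congrArg Fin.val h2
  -- the induced coloring on row sets
  set col' : Finset ℕ → κ := fun T av =>
    col (fun i => ((zpart T (fun j => (av j : ℕ)) i).image (x i))) with hcol'
  obtain ⟨H, hHV, hHcard, hmono⟩ := hR₀ (Finset.range R)
    (by rw [Finset.card_range]; exact le_max_left _ _) col'
  obtain ⟨H', hH'H, hH'card⟩ := exists_subset_card_eq hHcard
  set σ := H'.orderIsoOfFin hH'card with hσ
  have hidx : ∀ (i : Fin k) (q : Fin N), i.1 * N + q.1 < k * N := by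
    intro i q
    have h1 : i.1 * N + q.1 < (i.1 + 1) * N := by
      rw [Nat.succ_mul]; omega
    exact lt_of_lt_of_le h1 (Nat.mul_le_mul_right N i.isLt)
  set Blk : Fin k → Finset ℕ := fun i =>
    (univ : Finset (Fin N)).image (fun q => (σ ⟨i.1 * N + q.1, hidx i q⟩ : ℕ)) with hBlk
  have hBlkH' : ∀ i, Blk i ⊆ H' := by
    intro i t ht
    obtain ⟨q, -, rfl⟩ := mem_image.mp ht
    exact (σ _).2
  have hBlkR : ∀ i, ∀ t ∈ Blk i, t < R := by
    intro i t ht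
    exact Finset.mem_range.mp (hHV (hH'H (hBlkH' i ht)))
  have hBlkcard : ∀ i, (Blk i).card = N := by
    intro i
    rw [hBlk]
    rw [Finset.card_image_of_injOn, Finset.card_univ, Fintype.card_fin]
    intro q₁ _ q₂ _ hEq
    have := σ.injective (Subtype.ext hEq)
    have := congrArg Fin.val this
    simp only at this
    exact Fin.ext (by omega)
  have hBlkord : ∀ i j : Fin k, i < j → ∀ s ∈ Blk i, ∀ t ∈ Blk j, s < t := by
    intro i j hij s hs t ht
    obtain ⟨q, -, rfl⟩ := mem_image.mp hs
    obtain ⟨q', -, rfl⟩ := mem_image.mp ht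
    have hlt : (⟨i.1 * N + q.1, hidx i q⟩ : Fin (k * N)) < ⟨j.1 * N + q'.1, hidx j q'⟩ := by
      rw [Fin.mk_lt_mk]
      have h1 : i.1 * N + q.1 < (i.1 + 1) * N := by rw [Nat.succ_mul]; omega
      have h2 : (i.1 + 1) * N ≤ j.1 * N := Nat.mul_le_mul_right N hij
      omega
    exact Subtype.coe_lt_coe.mpr (σ.lt_iff_lt.mpr hlt)
  set Y : Fin k → Finset α := fun i => (Blk i).image (x i) with hY
  have hYcard : ∀ i, (Y i).card = N := by
    intro i
    rw [hY]
    rw [Finset.card_image_of_injOn, hBlkcard]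
    intro t₁ ht₁ t₂ ht₂ hEq
    exact hinj i t₁ (hBlkR i t₁ ht₁) t₂ (hBlkR i t₂ ht₂) hEq
  refine ⟨Y, ?_, ?_, ?_⟩
  · intro i z hz
    obtain ⟨t, ht, rfl⟩ := mem_image.mp hz
    exact hmem i t (hBlkR i t ht)
  · intro i
    rw [hYcard i]
    exact Finset.le_sup (mem_univ i)
  · intro a ha Z W hZsub hZcard hWsub hWcard
    -- common construction for Z and W
    have main : ∀ Z : Fin k → Finset α, (∀ i, Z i ⊆ Y i) → (∀ i, (Z i).card = a i) →
        ∃ T : Finset ℕ, T ⊆ H ∧ T.card = ∑ i, a i ∧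
          ∀ i, (zpart T a i).image (x i) = Z i := by
      intro Z hZs hZc
      set Tb : Fin k → Finset ℕ := fun i => (Blk i).filter (fun t => x i t ∈ Z i) with hTb
      have hTbBlk : ∀ i, Tb i ⊆ Blk i := fun i => filter_subset _ _
      have himg : ∀ i, (Tb i).image (x i) = Z i := by
        intro i
        apply Finset.Subset.antisymm
        · intro z hz
          obtain ⟨t, ht, rfl⟩ := mem_image.mp hz
          exact (mem_filter.mp ht).2
        · intro z hz
          obtain ⟨t, ht, rfl⟩ := mem_image.mp (hZs i hz)
          exact mem_image.mpr ⟨t, mem_filter.mpr ⟨ht, hz⟩, rfl⟩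
      have hTbcard : ∀ i, (Tb i).card = a i := by
        intro i
        have := Finset.card_image_of_injOn (s := Tb i) (f := x i) (by
          intro t₁ ht₁ t₂ ht₂ hEq
          exact hinj i t₁ (hBlkR i t₁ (hTbBlk i ht₁)) t₂ (hBlkR i t₂ (hTbBlk i ht₂)) hEq)
        rw [himg i, hZc i] at this
        omega
      have hTbord : ∀ i j : Fin k, i < j → ∀ s ∈ Tb i, ∀ t ∈ Tb j, s < t :=
        fun i j hij s hs t ht => hBlkord i j hij s (hTbBlk i hs) t (hTbBlk j ht)
      have hdisj : ∀ i ∈ (univ : Finset (Fin k)), ∀ j ∈ univ, i ≠ j →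
          Disjoint (Tb i) (Tb j) := by
        intro i _ j _ hij
        rw [Finset.disjoint_left]
        intro s hs hs'
        rcases lt_or_gt_of_ne hij with h | h
        · exact lt_irrefl s (hTbord i j h s hs s hs')
        · exact lt_irrefl s (hTbord j i h s hs' s hs)
      refine ⟨univ.biUnion Tb, ?_, ?_, ?_⟩
      · apply Finset.biUnion_subset.mpr
        intro i _
        exact fun t ht => hH'H (hBlkH' i (hTbBlk i ht))
      · rw [card_biUnion hdisj]
        exact Finset.sum_congr rfl (fun i _ => hTbcard i)
      · intro i
        rw [zpart_eq Tb a hTbord hTbcard i, himg i]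
    obtain ⟨T, hTH, hTcard, hTimg⟩ := main Z hZsub hZcard
    obtain ⟨T', hT'H, hT'card, hT'img⟩ := main W hWsub hWcard
    have hsle : ∑ i, a i ≤ S := Finset.sum_le_sum (fun i _ => ha i)
    have hcc : col' T = col' T' :=
      hmono (∑ i, a i) hsle T hTH T' hT'H hTcard hT'card
    set av : ∀ i : Fin k, Fin (m i + 1) := fun i => ⟨a i, Nat.lt_succ_of_le (ha i)⟩ with hav
    have hava : (fun j => ((av j : ℕ))) = a := funext (fun j => rfl)
    have h1 : col' T av = col Z := by
      rw [hcol']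
      simp only
      rw [hava]
      exact congrArg col (funext hTimg)
    have h2 : col' T' av = col W := by
      rw [hcol']
      simp only
      rw [hava]
      exact congrArg col (funext hT'img)
    rw [← h1, ← h2, hcc]
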